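/- Let G be a finite simple locally linear graph. The map sending each induced 4-cycle (x₁, x₂, x₃, x₄) of the triangle graph G* to the 4-cycle of G whose vertices are the shared vertices x₁∩x₂, x₂∩x₃, x₃∩x₄, x₄∩x₁ of consecutive triangles is a bijection from the set of induced 4-cycles of G* onto the set of induced 4-cycles of G. -/

import Mathlib

open SimpleGraph Polynomial Matrix

variable {V : Type*}

/-- A finite simple graph is *locally linear* if it has no isolated vertices and
every edge lies in exactly one triangle (3-clique). -/
def IsLocallyLinear (G : SimpleGraph V) : Prop :=
  (∀ v : V, ∃ w : V, G.Adj v w) ∧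
    ∀ ⦃x y : V⦄, G.Adj x y → ∃! t : Finset V, G.IsNClique 3 t ∧ x ∈ t ∧ y ∈ t

/-- The triangle graph `G*` of `G`: its vertices are the triangles (3-cliques) of `G`,
two distinct triangles being adjacent iff they share a common vertex. -/
def TriangleGraph (G : SimpleGraph V) : SimpleGraph {t : Finset V // G.IsNClique 3 t} where
  Adj a b := a ≠ b ∧ ∃ v : V, v ∈ a.1 ∧ v ∈ b.1
  symm := ⟨fun _ _ ⟨h, v, hv1, hv2⟩ => ⟨h.symm, v, hv2, hv1⟩⟩
  loopless := ⟨fun _ ⟨h, _⟩ => h rfl⟩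

/-- The diamond `K₄ - e`: the complete graph on four vertices with the edge `01` deleted. -/
def diamondGraph : SimpleGraph (Fin 4) where
  Adj a b := a ≠ b ∧ ¬(a = 0 ∧ b = 1) ∧ ¬(a = 1 ∧ b = 0)
  symm := ⟨fun _ _ ⟨h1, h2, h3⟩ =>
    ⟨h1.symm, fun ⟨ha, hb⟩ => h3 ⟨hb, ha⟩, fun ⟨ha, hb⟩ => h2 ⟨hb, ha⟩⟩⟩
  loopless := ⟨fun _ ⟨h, _⟩ => h rfl⟩

instance (G : SimpleGraph V) [DecidableEq V] [Fintype V] [DecidableRel G.Adj] :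
    Fintype {t : Finset V // G.IsNClique 3 t} := Subtype.fintype _

instance (G : SimpleGraph V) [Fintype V] [DecidableEq V] :
    DecidableRel (TriangleGraph G).Adj :=
  fun a b => inferInstanceAs (Decidable (a ≠ b ∧ ∃ v : V, v ∈ a.1 ∧ v ∈ b.1))

/-- The set of vertex subsets of `H` inducing a cycle of length `n`. -/
def inducedCycleSets {W : Type*} (H : SimpleGraph W) (n : ℕ) : Set (Set W) :=
  {s : Set W | s.ncard = n ∧ Nonempty (H.induce s ≃g cycleGraph n)}

section Aux

variable {G : SimpleGraph V}

lemma cycle4_char_mp {W : Type*} (H : SimpleGraph W) (s : Set W) :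
    s ∈ inducedCycleSets H 4 →
      ∃ a b c d : W, s = {a, b, c, d} ∧ a ≠ b ∧ a ≠ c ∧ a ≠ d ∧ b ≠ c ∧ b ≠ d ∧ c ≠ d ∧
        H.Adj a b ∧ H.Adj b c ∧ H.Adj c d ∧ H.Adj d a ∧ ¬H.Adj a c ∧ ¬H.Adj b d := by
  rintro ⟨hcard, ⟨e⟩⟩
  have hinj : ∀ i j : Fin 4, (e.symm i).1 = (e.symm j).1 → i = j := by
    intro i j h
    exact e.symm.injective (Subtype.ext h)
  have hadj : ∀ i j : Fin 4, H.Adj (e.symm i).1 (e.symm j).1 ↔ (cycleGraph 4).Adj i j := by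
    intro i j
    rw [← e.symm.map_adj_iff]
    rfl
  refine ⟨(e.symm 0).1, (e.symm 1).1, (e.symm 2).1, (e.symm 3).1, ?_, ?_, ?_, ?_, ?_, ?_, ?_,
    ?_, ?_, ?_, ?_, ?_, ?_⟩
  · ext x
    constructor
    · intro hx
      have h4 : ∀ i : Fin 4, i = 0 ∨ i = 1 ∨ i = 2 ∨ i = 3 := by decide
      have hx' : (e.symm (e ⟨x, hx⟩)).1 = x := congrArg Subtype.val (e.symm_apply_apply ⟨x, hx⟩)
      rcases h4 (e ⟨x, hx⟩) with h | h | h | h <;> rw [h] at hx' <;> simp [← hx']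
    · intro h
      simp only [Set.mem_insert_iff, Set.mem_singleton_iff] at h
      rcases h with rfl | rfl | rfl | rfl <;> exact (e.symm _).2
  · exact fun h => absurd (hinj _ _ h) (by decide)
  · exact fun h => absurd (hinj _ _ h) (by decide)
  · exact fun h => absurd (hinj _ _ h) (by decide)
  · exact fun h => absurd (hinj _ _ h) (by decide)
  · exact fun h => absurd (hinj _ _ h) (by decide)
  · exact fun h => absurd (hinj _ _ h) (by decide)
  · exact (hadj _ _).2 (by decide)
  · exact (hadj _ _).2 (by decide)
  · exact (hadj _ _).2 (by decide)
  · exact (hadj _ _).2 (by decide)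
  · exact fun h => absurd ((hadj _ _).1 h) (by decide)
  · exact fun h => absurd ((hadj _ _).1 h) (by decide)

lemma cycle4_char_mpr {W : Type*} (H : SimpleGraph W) {a b c d : W}
    (hab : a ≠ b) (hac : a ≠ c) (had : a ≠ d) (hbc : b ≠ c) (hbd : b ≠ d) (hcd : c ≠ d)
    (aab : H.Adj a b) (abc : H.Adj b c) (acd : H.Adj c d) (ada : H.Adj d a)
    (nac : ¬H.Adj a c) (nbd : ¬H.Adj b d) :
    ({a, b, c, d} : Set W) ∈ inducedCycleSets H 4 := by
  constructor
  · rw [Set.ncard_insert_of_notMem (by simp [hab, hac, had]),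
      Set.ncard_insert_of_notMem (by simp [hbc, hbd]),
      Set.ncard_insert_of_notMem (by simp [hcd]), Set.ncard_singleton]
  · refine ⟨RelIso.symm ⟨Equiv.ofBijective (fun i : Fin 4 =>
      (⟨![a, b, c, d] i, by fin_cases i <;> simp⟩ : ({a, b, c, d} : Set W))) ⟨?_, ?_⟩, ?_⟩⟩
    · intro i j h
      rw [Subtype.mk.injEq] at h
      fin_cases i <;> fin_cases j <;> simp_all
    · rintro ⟨x, hx⟩
      simp only [Set.mem_insert_iff, Set.mem_singleton_iff] at hx
      rcases hx with rfl | rfl | rfl | rfl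
      exacts [⟨0, rfl⟩, ⟨1, rfl⟩, ⟨2, rfl⟩, ⟨3, rfl⟩]
    · intro i j
      fin_cases i <;> fin_cases j <;>
        simp only [Equiv.ofBijective_apply, comap_adj, Function.Embedding.coe_subtype,
          Matrix.cons_val_zero, Matrix.cons_val_one, Matrix.head_cons, Matrix.cons_val_two,
          Matrix.tail_cons, Matrix.cons_val_three, Matrix.head_fin_const] <;>
        dsimp only [Equiv.ofBijective, Equiv.coe_fn_mk] <;>
        first
          | exact iff_of_true aab (by decide)
          | exact iff_of_true abc (by decide)
          | exact iff_of_true acd (by decide)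
          | exact iff_of_true ada (by decide)
          | exact iff_of_true aab.symm (by decide)
          | exact iff_of_true abc.symm (by decide)
          | exact iff_of_true acd.symm (by decide)
          | exact iff_of_true ada.symm (by decide)
          | exact iff_of_false (H.irrefl) (by decide)
          | exact iff_of_false nac (by decide)
          | exact iff_of_false nbd (by decide)
          | exact iff_of_false (fun h => nac h.symm) (by decide)
          | exact iff_of_false (fun h => nbd h.symm) (by decide)

lemma tri_adj {t : Finset V} (ht : G.IsNClique 3 t) {u v : V}
    (hu : u ∈ t) (hv : v ∈ t) (huv : u ≠ v) : G.Adj u v :=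
  ht.1 (Finset.mem_coe.mpr hu) (Finset.mem_coe.mpr hv) huv

lemma tri_eq (hG : IsLocallyLinear G) {t t' : Finset V}
    (ht : G.IsNClique 3 t) (ht' : G.IsNClique 3 t') {u v : V} (huv : u ≠ v)
    (hu : u ∈ t) (hv : v ∈ t) (hu' : u ∈ t') (hv' : v ∈ t') : t = t' :=
  (hG.2 (tri_adj ht hu hv huv)).unique ⟨ht, hu, hv⟩ ⟨ht', hu', hv'⟩

lemma shared_eq (hG : IsLocallyLinear G) {t t' : {t : Finset V // G.IsNClique 3 t}}
    (hne : t ≠ t') {u v : V} (hu : u ∈ t.1) (hu' : u ∈ t'.1) (hv : v ∈ t.1) (hv' : v ∈ t'.1) :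
    u = v := by
  by_contra h
  exact hne (Subtype.ext (tri_eq hG t.2 t'.2 h hu hv hu' hv'))

lemma imageEq (hG : IsLocallyLinear G) {t₁ t₂ t₃ t₄ : {t : Finset V // G.IsNClique 3 t}}
    {a b c d : V}
    (h12 : t₁ ≠ t₂) (h23 : t₂ ≠ t₃) (h34 : t₃ ≠ t₄) (h41 : t₄ ≠ t₁)
    (no13 : ∀ v, v ∈ t₁.1 → v ∈ t₃.1 → False) (no24 : ∀ v, v ∈ t₂.1 → v ∈ t₄.1 → False)
    (ha1 : a ∈ t₁.1) (ha2 : a ∈ t₂.1) (hb2 : b ∈ t₂.1) (hb3 : b ∈ t₃.1)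
    (hc3 : c ∈ t₃.1) (hc4 : c ∈ t₄.1) (hd4 : d ∈ t₄.1) (hd1 : d ∈ t₁.1) :
    {v : V | ∃ p ∈ ({t₁, t₂, t₃, t₄} : Set {t : Finset V // G.IsNClique 3 t}),
        ∃ q ∈ ({t₁, t₂, t₃, t₄} : Set {t : Finset V // G.IsNClique 3 t}),
          p ≠ q ∧ v ∈ p.1 ∧ v ∈ q.1} = {a, b, c, d} := by
  ext v
  simp only [Set.mem_setOf_eq, Set.mem_insert_iff, Set.mem_singleton_iff]
  constructor
  · rintro ⟨p, hp, q, hq, hpq, hvp, hvq⟩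
    rcases hp with rfl | rfl | rfl | rfl <;> rcases hq with rfl | rfl | rfl | rfl <;>
      first
        | exact absurd rfl hpq
        | exact absurd hvq (fun h => no13 v hvp h)
        | exact absurd hvq (fun h => no13 v h hvp)
        | exact absurd hvq (fun h => no24 v hvp h)
        | exact absurd hvq (fun h => no24 v h hvp)
        | exact Or.inl (shared_eq hG h12 hvp hvq ha1 ha2)
        | exact Or.inl (shared_eq hG (Ne.symm h12) hvp hvq ha2 ha1)
        | exact Or.inr (Or.inl (shared_eq hG h23 hvp hvq hb2 hb3))
        | exact Or.inr (Or.inl (shared_eq hG (Ne.symm h23) hvp hvq hb3 hb2))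
        | exact Or.inr (Or.inr (Or.inl (shared_eq hG h34 hvp hvq hc3 hc4)))
        | exact Or.inr (Or.inr (Or.inl (shared_eq hG (Ne.symm h34) hvp hvq hc4 hc3)))
        | exact Or.inr (Or.inr (Or.inr (shared_eq hG h41 hvp hvq hd4 hd1)))
        | exact Or.inr (Or.inr (Or.inr (shared_eq hG (Ne.symm h41) hvp hvq hd1 hd4)))
  · rintro (rfl | rfl | rfl | rfl)
    · exact ⟨t₁, Or.inl rfl, t₂, Or.inr (Or.inl rfl), h12, ha1, ha2⟩
    · exact ⟨t₂, Or.inr (Or.inl rfl), t₃, Or.inr (Or.inr (Or.inl rfl)), h23, hb2, hb3⟩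
    · exact ⟨t₃, Or.inr (Or.inr (Or.inl rfl)), t₄, Or.inr (Or.inr (Or.inr rfl)), h34, hc3, hc4⟩
    · exact ⟨t₄, Or.inr (Or.inr (Or.inr rfl)), t₁, Or.inl rfl, h41, hd4, hd1⟩

/-- Full decomposition of an induced 4-cycle of the triangle graph. -/
lemma decomp [DecidableEq V] (hG : IsLocallyLinear G) {s : Set {t : Finset V // G.IsNClique 3 t}}
    (hs : s ∈ inducedCycleSets (TriangleGraph G) 4) :
    ∃ t₁ t₂ t₃ t₄ : {t : Finset V // G.IsNClique 3 t}, ∃ a b c d : V,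
      s = {t₁, t₂, t₃, t₄} ∧
      a ∈ t₁.1 ∧ a ∈ t₂.1 ∧ b ∈ t₂.1 ∧ b ∈ t₃.1 ∧ c ∈ t₃.1 ∧ c ∈ t₄.1 ∧ d ∈ t₄.1 ∧ d ∈ t₁.1 ∧
      a ≠ b ∧ a ≠ c ∧ a ≠ d ∧ b ≠ c ∧ b ≠ d ∧ c ≠ d ∧
      G.Adj a b ∧ G.Adj b c ∧ G.Adj c d ∧ G.Adj d a ∧ ¬G.Adj a c ∧ ¬G.Adj b d ∧
      {v : V | ∃ p ∈ s, ∃ q ∈ s, p ≠ q ∧ v ∈ p.1 ∧ v ∈ q.1} = {a, b, c, d} := by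
  obtain ⟨t₁, t₂, t₃, t₄, hseq, h12, h13, h14, h23, h24, h34,
    A12, A23, A34, A41, N13, N24⟩ := cycle4_char_mp (TriangleGraph G) s hs
  obtain ⟨-, a, ha1, ha2⟩ := A12
  obtain ⟨-, b, hb2, hb3⟩ := A23
  obtain ⟨-, c, hc3, hc4⟩ := A34
  obtain ⟨-, d, hd4, hd1⟩ := A41
  have no13 : ∀ v, v ∈ t₁.1 → v ∈ t₃.1 → False := fun v h1 h3 => N13 ⟨h13, v, h1, h3⟩
  have no24 : ∀ v, v ∈ t₂.1 → v ∈ t₄.1 → False := fun v h2 h4 => N24 ⟨h24, v, h2, h4⟩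
  have hab : a ≠ b := fun h => no13 a ha1 (h ▸ hb3)
  have hac : a ≠ c := fun h => no13 a ha1 (h ▸ hc3)
  have had : a ≠ d := fun h => no24 a ha2 (h ▸ hd4)
  have hbc : b ≠ c := fun h => no24 b hb2 (h ▸ hc4)
  have hbd : b ≠ d := fun h => no13 b (h ▸ hd1) hb3
  have hcd : c ≠ d := fun h => no13 c (h ▸ hd1) hc3
  have Aab : G.Adj a b := tri_adj t₂.2 ha2 hb2 hab
  have Abc : G.Adj b c := tri_adj t₃.2 hb3 hc3 hbc
  have Acd : G.Adj c d := tri_adj t₄.2 hc4 hd4 hcd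
  have Ada : G.Adj d a := tri_adj t₁.2 hd1 ha1 (Ne.symm had)
  have Nac : ¬G.Adj a c := by
    intro h
    have htri : G.IsNClique 3 {a, b, c} := is3Clique_triple_iff.2 ⟨Aab, h, Abc⟩
    have h2 : t₂.1 = {a, b, c} := tri_eq hG t₂.2 htri hab ha2 hb2 (by simp) (by simp)
    exact no24 c (h2 ▸ (by simp : c ∈ ({a, b, c} : Finset V))) hc4
  have Nbd : ¬G.Adj b d := by
    intro h
    have htri : G.IsNClique 3 {b, c, d} := is3Clique_triple_iff.2 ⟨Abc, h, Acd⟩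
    have h3 : t₃.1 = {b, c, d} := tri_eq hG t₃.2 htri hbc hb3 hc3 (by simp) (by simp)
    exact no13 d hd1 (h3 ▸ (by simp : d ∈ ({b, c, d} : Finset V)))
  refine ⟨t₁, t₂, t₃, t₄, a, b, c, d, hseq, ha1, ha2, hb2, hb3, hc3, hc4, hd4, hd1,
    hab, hac, had, hbc, hbd, hcd, Aab, Abc, Acd, Ada, Nac, Nbd, ?_⟩
  rw [hseq]
  exact imageEq hG h12 h23 h34 (Ne.symm h14) no13 no24 ha1 ha2 hb2 hb3 hc3 hc4 hd4 hd1

lemma absorb (hG : IsLocallyLinear G) {t t₁' t₂' t₃' t₄' : {t : Finset V // G.IsNClique 3 t}}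
    {u v a' b' c' d' : V}
    (hu : u ∈ t.1) (hv : v ∈ t.1) (huv : u ≠ v)
    (ha1 : a' ∈ t₁'.1) (ha2 : a' ∈ t₂'.1) (hb2 : b' ∈ t₂'.1) (hb3 : b' ∈ t₃'.1)
    (hc3 : c' ∈ t₃'.1) (hc4 : c' ∈ t₄'.1) (hd4 : d' ∈ t₄'.1) (hd1 : d' ∈ t₁'.1)
    (nac : ¬G.Adj a' c') (nbd : ¬G.Adj b' d')
    (hu' : u = a' ∨ u = b' ∨ u = c' ∨ u = d') (hv' : v = a' ∨ v = b' ∨ v = c' ∨ v = d') :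
    t = t₁' ∨ t = t₂' ∨ t = t₃' ∨ t = t₄' := by
  have hAdj : G.Adj u v := tri_adj t.2 hu hv huv
  rcases hu' with rfl | rfl | rfl | rfl <;> rcases hv' with rfl | rfl | rfl | rfl <;>
    first
      | exact absurd rfl huv
      | exact absurd hAdj nac
      | exact absurd hAdj.symm nac
      | exact absurd hAdj nbd
      | exact absurd hAdj.symm nbd
      | exact Or.inl (Subtype.ext (tri_eq hG t.2 t₁'.2 huv hu hv hd1 ha1))
      | exact Or.inl (Subtype.ext (tri_eq hG t.2 t₁'.2 huv hu hv ha1 hd1))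
      | exact Or.inr (Or.inl (Subtype.ext (tri_eq hG t.2 t₂'.2 huv hu hv ha2 hb2)))
      | exact Or.inr (Or.inl (Subtype.ext (tri_eq hG t.2 t₂'.2 huv hu hv hb2 ha2)))
      | exact Or.inr (Or.inr (Or.inl (Subtype.ext (tri_eq hG t.2 t₃'.2 huv hu hv hb3 hc3))))
      | exact Or.inr (Or.inr (Or.inl (Subtype.ext (tri_eq hG t.2 t₃'.2 huv hu hv hc3 hb3))))
      | exact Or.inr (Or.inr (Or.inr (Subtype.ext (tri_eq hG t.2 t₄'.2 huv hu hv hc4 hd4))))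
      | exact Or.inr (Or.inr (Or.inr (Subtype.ext (tri_eq hG t.2 t₄'.2 huv hu hv hd4 hc4))))

lemma inj_subset [DecidableEq V] (hG : IsLocallyLinear G)
    {s s' : Set {t : Finset V // G.IsNClique 3 t}}
    (hs : s ∈ inducedCycleSets (TriangleGraph G) 4)
    (hs' : s' ∈ inducedCycleSets (TriangleGraph G) 4)
    (himg : {v : V | ∃ p ∈ s, ∃ q ∈ s, p ≠ q ∧ v ∈ p.1 ∧ v ∈ q.1}
      = {v : V | ∃ p ∈ s', ∃ q ∈ s', p ≠ q ∧ v ∈ p.1 ∧ v ∈ q.1}) : s ⊆ s' := by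
  obtain ⟨t₁, t₂, t₃, t₄, a, b, c, d, hseq, ha1, ha2, hb2, hb3, hc3, hc4, hd4, hd1,
    hab, hac, had, hbc, hbd, hcd, Aab, Abc, Acd, Ada, Nac, Nbd, himgS⟩ := decomp hG hs
  obtain ⟨t₁', t₂', t₃', t₄', a', b', c', d', hseq', ha1', ha2', hb2', hb3', hc3', hc4', hd4',
    hd1', hab', hac', had', hbc', hbd', hcd', Aab', Abc', Acd', Ada', Nac', Nbd', himgS'⟩ :=
    decomp hG hs'
  have hkey : ∀ x : V, (x = a ∨ x = b ∨ x = c ∨ x = d) →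
      (x = a' ∨ x = b' ∨ x = c' ∨ x = d') := by
    intro x hx
    have hx2 : x ∈ ({a, b, c, d} : Set V) := by simpa using hx
    rw [← himgS, himg, himgS'] at hx2
    simpa using hx2
  intro t ht
  rw [hseq] at ht
  rw [hseq']
  have mem4 : t = t₁ ∨ t = t₂ ∨ t = t₃ ∨ t = t₄ := by simpa using ht
  have goal4 : t = t₁' ∨ t = t₂' ∨ t = t₃' ∨ t = t₄' →
      t ∈ ({t₁', t₂', t₃', t₄'} : Set {t : Finset V // G.IsNClique 3 t}) := by
    rintro (rfl | rfl | rfl | rfl) <;> simp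
  rcases mem4 with rfl | rfl | rfl | rfl
  · exact goal4 (absorb hG hd1 ha1 (Ne.symm had) ha1' ha2' hb2' hb3' hc3' hc4' hd4' hd1'
      Nac' Nbd' (hkey d (by simp)) (hkey a (by simp)))
  · exact goal4 (absorb hG ha2 hb2 hab ha1' ha2' hb2' hb3' hc3' hc4' hd4' hd1'
      Nac' Nbd' (hkey a (by simp)) (hkey b (by simp)))
  · exact goal4 (absorb hG hb3 hc3 hbc ha1' ha2' hb2' hb3' hc3' hc4' hd4' hd1'
      Nac' Nbd' (hkey b (by simp)) (hkey c (by simp)))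
  · exact goal4 (absorb hG hc4 hd4 hcd ha1' ha2' hb2' hb3' hc3' hc4' hd4' hd1'
      Nac' Nbd' (hkey c (by simp)) (hkey d (by simp)))

end Aux

/-- The map sending an induced 4-cycle of the triangle graph `G*` to the 4-cycle of `G`
formed by the vertices shared by (consecutive) pairs of its triangles is a bijection
from the induced 4-cycles of `G*` onto the induced 4-cycles of `G`. -/
theorem quadrilateral_bijOn [Fintype V] (G : SimpleGraph V) (hG : IsLocallyLinear G) :
    Set.BijOn
      (fun s : Set {t : Finset V // G.IsNClique 3 t} =>
        {v : V | ∃ t₁ ∈ s, ∃ t₂ ∈ s, t₁ ≠ t₂ ∧ v ∈ t₁.1 ∧ v ∈ t₂.1})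
      (inducedCycleSets (TriangleGraph G) 4) (inducedCycleSets G 4) := by
  classical
  refine ⟨?_, ?_, ?_⟩
  · -- MapsTo
    intro s hs
    obtain ⟨t₁, t₂, t₃, t₄, a, b, c, d, hseq, ha1, ha2, hb2, hb3, hc3, hc4, hd4, hd1,
      hab, hac, had, hbc, hbd, hcd, Aab, Abc, Acd, Ada, Nac, Nbd, himg⟩ := decomp hG hs
    show {v : V | ∃ p ∈ s, ∃ q ∈ s, p ≠ q ∧ v ∈ p.1 ∧ v ∈ q.1} ∈ inducedCycleSets G 4
    rw [himg]
    exact cycle4_char_mpr G hab hac had hbc hbd hcd Aab Abc Acd Ada Nac Nbd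
  · -- InjOn
    intro s hs s' hs' heq
    exact Set.Subset.antisymm (inj_subset hG hs hs' heq) (inj_subset hG hs' hs heq.symm)
  · -- SurjOn
    intro s' hs'
    obtain ⟨a, b, c, d, hseq, hab, hac, had, hbc, hbd, hcd, Aab, Abc, Acd, Ada, Nac, Nbd⟩ :=
      cycle4_char_mp G s' hs'
    obtain ⟨T2, ⟨hT2, haT2, hbT2⟩, -⟩ := hG.2 Aab
    obtain ⟨T3, ⟨hT3, hbT3, hcT3⟩, -⟩ := hG.2 Abc
    obtain ⟨T4, ⟨hT4, hcT4, hdT4⟩, -⟩ := hG.2 Acd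
    obtain ⟨T1, ⟨hT1, hdT1, haT1⟩, -⟩ := hG.2 Ada
    have no13 : ∀ v, v ∈ T1 → v ∈ T3 → False := by
      intro v h1 h3
      by_cases hva : v = a
      · subst hva; exact Nac (tri_adj hT3 h3 hcT3 hac)
      by_cases hvd : v = d
      · subst hvd; exact Nbd (tri_adj hT3 hbT3 h3 hbd)
      by_cases hvb : v = b
      · subst hvb; exact Nbd (tri_adj hT1 h1 hdT1 hbd)
      by_cases hvc : v = c
      · subst hvc; exact Nac (tri_adj hT1 h1 haT1 (Ne.symm hac)).symm
      · have hva' : G.Adj v a := tri_adj hT1 h1 haT1 hva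
        have hvd' : G.Adj v d := tri_adj hT1 h1 hdT1 hvd
        have hvb' : G.Adj v b := tri_adj hT3 h3 hbT3 hvb
        have hvc' : G.Adj v c := tri_adj hT3 h3 hcT3 hvc
        have hX : G.IsNClique 3 {v, a, b} := is3Clique_triple_iff.2 ⟨hva', hvb', Aab⟩
        have hY : G.IsNClique 3 {v, a, d} := is3Clique_triple_iff.2 ⟨hva', hvd', Ada.symm⟩
        have hXY : ({v, a, b} : Finset V) = {v, a, d} :=
          tri_eq hG hX hY hva (by simp) (by simp) (by simp) (by simp)
        have hb' : b ∈ ({v, a, d} : Finset V) := hXY ▸ (by simp : b ∈ ({v, a, b} : Finset V))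
        simp only [Finset.mem_insert, Finset.mem_singleton] at hb'
        rcases hb' with h | h | h
        exacts [hvb h.symm, hab h.symm, hbd h]
    have no24 : ∀ v, v ∈ T2 → v ∈ T4 → False := by
      intro v h2 h4
      by_cases hva : v = a
      · subst hva; exact Nac (tri_adj hT4 h4 hcT4 hac)
      by_cases hvb : v = b
      · subst hvb; exact Nbd (tri_adj hT4 h4 hdT4 hbd)
      by_cases hvc : v = c
      · subst hvc; exact Nac (tri_adj hT2 haT2 h2 hac)
      by_cases hvd : v = d
      · subst hvd; exact Nbd (tri_adj hT2 hbT2 h2 hbd)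
      · have hva' : G.Adj v a := tri_adj hT2 h2 haT2 hva
        have hvb' : G.Adj v b := tri_adj hT2 h2 hbT2 hvb
        have hvc' : G.Adj v c := tri_adj hT4 h4 hcT4 hvc
        have hvd' : G.Adj v d := tri_adj hT4 h4 hdT4 hvd
        have hX : G.IsNClique 3 {v, b, c} := is3Clique_triple_iff.2 ⟨hvb', hvc', Abc⟩
        have hY : G.IsNClique 3 {v, b, a} := is3Clique_triple_iff.2 ⟨hvb', hva', Aab.symm⟩
        have hXY : ({v, b, c} : Finset V) = {v, b, a} :=
          tri_eq hG hX hY hvb (by simp) (by simp) (by simp) (by simp)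
        have hc' : c ∈ ({v, b, a} : Finset V) := hXY ▸ (by simp : c ∈ ({v, b, c} : Finset V))
        simp only [Finset.mem_insert, Finset.mem_singleton] at hc'
        rcases hc' with h | h | h
        exacts [hvc h.symm, hbc h.symm, hac h.symm]
    have nf12 : T1 ≠ T2 := by
      intro h; exact Nbd (tri_adj hT1 (by rw [h]; exact hbT2) hdT1 hbd)
    have nf13 : T1 ≠ T3 := by
      intro h; exact no13 a haT1 (by rw [← h]; exact haT1)
    have nf14 : T1 ≠ T4 := by
      intro h; exact Nac (tri_adj hT1 haT1 (by rw [h]; exact hcT4) hac)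
    have nf23 : T2 ≠ T3 := by
      intro h; exact Nac (tri_adj hT2 haT2 (by rw [h]; exact hcT3) hac)
    have nf24 : T2 ≠ T4 := by
      intro h; exact no24 b hbT2 (by rw [← h]; exact hbT2)
    have nf34 : T3 ≠ T4 := by
      intro h; exact Nbd (tri_adj hT3 hbT3 (by rw [h]; exact hdT4) hbd)
    have sub12 : (⟨T1, hT1⟩ : {t : Finset V // G.IsNClique 3 t}) ≠ ⟨T2, hT2⟩ :=
      fun h => nf12 (congrArg Subtype.val h)
    have sub13 : (⟨T1, hT1⟩ : {t : Finset V // G.IsNClique 3 t}) ≠ ⟨T3, hT3⟩ :=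
      fun h => nf13 (congrArg Subtype.val h)
    have sub14 : (⟨T1, hT1⟩ : {t : Finset V // G.IsNClique 3 t}) ≠ ⟨T4, hT4⟩ :=
      fun h => nf14 (congrArg Subtype.val h)
    have sub23 : (⟨T2, hT2⟩ : {t : Finset V // G.IsNClique 3 t}) ≠ ⟨T3, hT3⟩ :=
      fun h => nf23 (congrArg Subtype.val h)
    have sub24 : (⟨T2, hT2⟩ : {t : Finset V // G.IsNClique 3 t}) ≠ ⟨T4, hT4⟩ :=
      fun h => nf24 (congrArg Subtype.val h)
    have sub34 : (⟨T3, hT3⟩ : {t : Finset V // G.IsNClique 3 t}) ≠ ⟨T4, hT4⟩ :=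
      fun h => nf34 (congrArg Subtype.val h)
    have hsrc : ({⟨T1, hT1⟩, ⟨T2, hT2⟩, ⟨T3, hT3⟩, ⟨T4, hT4⟩} :
        Set {t : Finset V // G.IsNClique 3 t}) ∈ inducedCycleSets (TriangleGraph G) 4 :=
      cycle4_char_mpr (TriangleGraph G) sub12 sub13 sub14 sub23 sub24 sub34
        ⟨sub12, a, haT1, haT2⟩ ⟨sub23, b, hbT2, hbT3⟩ ⟨sub34, c, hcT3, hcT4⟩
        ⟨Ne.symm sub14, d, hdT4, hdT1⟩
        (by rintro ⟨-, v, h1, h3⟩; exact no13 v h1 h3)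
        (by rintro ⟨-, v, h2, h4⟩; exact no24 v h2 h4)
    refine ⟨_, hsrc, ?_⟩
    show {v : V | ∃ p ∈ ({⟨T1, hT1⟩, ⟨T2, hT2⟩, ⟨T3, hT3⟩, ⟨T4, hT4⟩} :
        Set {t : Finset V // G.IsNClique 3 t}), ∃ q ∈ ({⟨T1, hT1⟩, ⟨T2, hT2⟩, ⟨T3, hT3⟩,
        ⟨T4, hT4⟩} : Set {t : Finset V // G.IsNClique 3 t}),
        p ≠ q ∧ v ∈ p.1 ∧ v ∈ q.1} = s'
    rw [hseq]
    exact imageEq hG sub12 sub23 sub34 (Ne.symm sub14)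
      (fun v h1 h3 => no13 v h1 h3) (fun v h2 h4 => no24 v h2 h4)
      haT1 haT2 hbT2 hbT3 hcT3 hcT4 hdT4 hdT1
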